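/- Let d ≥ 1, σ > 0, and let u : ℝ^d → ℝ be bounded and measurable with 𝔲 = sup_{x ∈ ℝ^d} |u(x)|. Then the Gaussian smoothing f of u is Lipschitz continuous with respect to the Euclidean norm with Lipschitz constant (𝔲/σ)√(2/π); that is, |f(x) − f(y)| ≤ (𝔲/σ)√(2/π) ‖x − y‖₂ for all x, y ∈ ℝ^d. -/

import Mathlib

open MeasureTheory Real

noncomputable def gaussDensity (d : ℕ) (σ : ℝ) (z : EuclideanSpace ℝ (Fin d)) : ℝ :=
  (2 * Real.pi * σ ^ 2) ^ (-(d : ℝ) / 2) * Real.exp (-‖z‖ ^ 2 / (2 * σ ^ 2))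

noncomputable def gaussSmooth (d : ℕ) (σ : ℝ) (u : EuclideanSpace ℝ (Fin d) → ℝ)
    (x : EuclideanSpace ℝ (Fin d)) : ℝ :=
  ∫ z, u (x + z) * gaussDensity d σ z

open Set

section Aux

lemma g_eq' {σ : ℝ} (hσ : 0 < σ) (t : ℝ) :
    -t ^ 2 / (2 * σ ^ 2) = -(2 * σ ^ 2)⁻¹ * t ^ 2 := by
  field_simp

lemma integrable_g {σ : ℝ} (hσ : 0 < σ) :
    Integrable (fun t : ℝ => Real.exp (-t ^ 2 / (2 * σ ^ 2))) := by
  simp_rw [g_eq' hσ]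
  exact integrable_exp_neg_mul_sq (by positivity)

lemma integral_g {σ : ℝ} (hσ : 0 < σ) :
    ∫ t : ℝ, Real.exp (-t ^ 2 / (2 * σ ^ 2)) = Real.sqrt (2 * Real.pi * σ ^ 2) := by
  simp_rw [g_eq' hσ]
  rw [integral_gaussian]
  congr 1
  field_simp

lemma oneD_bound {σ a : ℝ} (hσ : 0 < σ) (ha : 0 ≤ a) :
    ∫ t : ℝ, |Real.exp (-(t - a) ^ 2 / (2 * σ ^ 2)) - Real.exp (-t ^ 2 / (2 * σ ^ 2))|
      ≤ 2 * a := by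
  set g : ℝ → ℝ := fun t => Real.exp (-t ^ 2 / (2 * σ ^ 2)) with hg
  have hgint : Integrable g := integrable_g hσ
  have hgsh : Integrable (fun t => g (t - a)) := hgint.comp_sub_right a
  have hΔ : Integrable (fun t => |g (t - a) - g t|) := (hgsh.sub hgint).abs
  set c := a / 2 with hc
  have htrans : ∀ s : Set ℝ, MeasurableSet s →
      ∫ t in (fun t => t - a) ⁻¹' s, g (t - a) = ∫ t in s, g t := by
    intro s _
    exact (measurePreserving_sub_right volume a).setIntegral_preimage_emb
      (MeasurableEquiv.subRight a).measurableEmbedding g s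
  have hIic : ∫ t in Iic c, g (t - a) = ∫ t in Iic (-c), g t := by
    have := htrans (Iic (-c)) measurableSet_Iic
    rw [show (fun t => t - a) ⁻¹' Iic (-c) = Iic c by
      ext t; simp only [mem_preimage, mem_Iic]; constructor <;> intro h <;> linarith] at this
    exact this
  have hIoi : ∫ t in Ioi c, g (t - a) = ∫ t in Ioi (-c), g t := by
    have := htrans (Ioi (-c)) measurableSet_Ioi
    rw [show (fun t => t - a) ⁻¹' Ioi (-c) = Ioi c by
      ext t; simp only [mem_preimage, mem_Ioi]; constructor <;> intro h <;> linarith] at this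
    exact this
  have hsplit : ∫ t : ℝ, |g (t - a) - g t|
      = (∫ t in Iic c, |g (t - a) - g t|) + ∫ t in Ioi c, |g (t - a) - g t| :=
    (intervalIntegral.integral_Iic_add_Ioi hΔ.integrableOn hΔ.integrableOn).symm
  have hmono : ∀ s t : ℝ, s ^ 2 ≤ t ^ 2 → g t ≤ g s := by
    intro s t h
    apply Real.exp_le_exp.2
    have h2 : (0:ℝ) < 2 * σ ^ 2 := by positivity
    apply div_le_div_of_nonneg_right (by linarith) h2.le |>.trans_eq rfl
  have habs1 : ∫ t in Iic c, |g (t - a) - g t|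
      = (∫ t in Iic c, g t) - ∫ t in Iic c, g (t - a) := by
    have heq : EqOn (fun t => |g (t - a) - g t|) (fun t => g t - g (t - a)) (Iic c) := by
      intro t ht
      have h1 : g (t - a) ≤ g t := hmono t (t - a) (by nlinarith [mem_Iic.1 ht])
      simp only
      rw [abs_sub_comm, abs_of_nonneg (sub_nonneg.2 h1)]
    rw [setIntegral_congr_fun measurableSet_Iic heq,
      integral_sub hgint.integrableOn hgsh.integrableOn]
  have habs2 : ∫ t in Ioi c, |g (t - a) - g t|
      = (∫ t in Ioi c, g (t - a)) - ∫ t in Ioi c, g t := by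
    have heq : EqOn (fun t => |g (t - a) - g t|) (fun t => g (t - a) - g t) (Ioi c) := by
      intro t ht
      have h1 : g t ≤ g (t - a) := hmono (t - a) t (by nlinarith [(mem_Ioi.1 ht).le])
      simp only
      rw [abs_of_nonneg (sub_nonneg.2 h1)]
    rw [setIntegral_congr_fun measurableSet_Ioi heq,
      integral_sub hgsh.integrableOn hgint.integrableOn]
  have hT1 : (∫ t in Iic c, g t) + ∫ t in Ioi c, g t = ∫ t, g t :=
    intervalIntegral.integral_Iic_add_Ioi hgint.integrableOn hgint.integrableOn
  have hT2 : (∫ t in Iic (-c), g t) + ∫ t in Ioi (-c), g t = ∫ t, g t :=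
    intervalIntegral.integral_Iic_add_Ioi hgint.integrableOn hgint.integrableOn
  have hkey : ∫ t : ℝ, |g (t - a) - g t|
      = 2 * ((∫ t in Iic c, g t) - ∫ t in Iic (-c), g t) := by
    rw [hsplit, habs1, habs2, hIic, hIoi]; linarith
  have hiv : (∫ t in Iic c, g t) - ∫ t in Iic (-c), g t = ∫ t in (-c)..c, g t :=
    intervalIntegral.integral_Iic_sub_Iic hgint.integrableOn hgint.integrableOn
  have hbd : ∫ t in (-c)..c, g t ≤ a := by
    have h1 : ∀ x ∈ uIoc (-c) c, ‖g x‖ ≤ 1 := by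
      intro x _
      rw [Real.norm_eq_abs, abs_of_pos (Real.exp_pos _)]
      have hle : -x ^ 2 / (2 * σ ^ 2) ≤ 0 :=
        div_nonpos_of_nonpos_of_nonneg (by nlinarith [sq_nonneg x]) (by positivity)
      calc g x ≤ Real.exp 0 := Real.exp_le_exp.2 hle
        _ = 1 := Real.exp_zero
    have h2 := intervalIntegral.norm_integral_le_of_norm_le_const h1
    have h3 : |c - (-c)| = a := by rw [hc]; rw [abs_of_nonneg (by linarith)]; ring
    calc ∫ t in (-c)..c, g t ≤ ‖∫ t in (-c)..c, g t‖ := le_abs_self _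
      _ ≤ 1 * |c - (-c)| := h2
      _ = a := by rw [one_mul, h3]
  calc ∫ t : ℝ, |g (t - a) - g t| = 2 * ((∫ t in Iic c, g t) - ∫ t in Iic (-c), g t) := hkey
    _ = 2 * ∫ t in (-c)..c, g t := by rw [hiv]
    _ ≤ 2 * a := by linarith

lemma const_split {σ : ℝ} (hσ : 0 < σ) (d : ℕ) :
    (2 * Real.pi * σ ^ 2) ^ (-(d : ℝ) / 2)
      = ((2 * Real.pi * σ ^ 2) ^ (-(1 : ℝ) / 2)) ^ d := by
  have hpos : (0 : ℝ) < 2 * Real.pi * σ ^ 2 := by positivity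
  rw [← Real.rpow_natCast ((2 * Real.pi * σ ^ 2) ^ (-(1 : ℝ) / 2)) d,
    ← Real.rpow_mul hpos.le]
  congr 1
  ring

lemma gauss_factor {σ : ℝ} (hσ : 0 < σ) (d : ℕ) (y : EuclideanSpace ℝ (Fin d)) :
    gaussDensity d σ y
      = ∏ i, ((2 * Real.pi * σ ^ 2) ^ (-(1 : ℝ) / 2)
          * Real.exp (-(y i) ^ 2 / (2 * σ ^ 2))) := by
  have hnorm : ‖y‖ ^ 2 = ∑ i, (y i) ^ 2 := by
    rw [EuclideanSpace.norm_eq, Real.sq_sqrt (by positivity)]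
    simp [Real.norm_eq_abs, sq_abs]
  rw [gaussDensity, hnorm, const_split hσ, Finset.prod_mul_distrib, Finset.prod_const,
    Finset.card_univ, Fintype.card_fin]
  congr 1
  rw [← Real.exp_sum]
  congr 1
  rw [← Finset.sum_neg_distrib, Finset.sum_div]

lemma two_c0 {σ : ℝ} (hσ : 0 < σ) :
    2 * (2 * Real.pi * σ ^ 2) ^ (-(1 : ℝ) / 2) = Real.sqrt (2 / Real.pi) / σ := by
  have hpos : (0 : ℝ) < 2 * Real.pi * σ ^ 2 := by positivity
  have h1 : (2 * Real.pi * σ ^ 2) ^ (-(1 : ℝ) / 2)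
      = (Real.sqrt (2 * Real.pi) * σ)⁻¹ := by
    rw [neg_div, Real.rpow_neg hpos.le, ← Real.sqrt_eq_rpow,
      Real.sqrt_mul (by positivity) (σ ^ 2), Real.sqrt_sq hσ.le]
  rw [h1]
  have hs : Real.sqrt (2 / Real.pi) * Real.sqrt (2 * Real.pi) = 2 := by
    rw [← Real.sqrt_mul (by positivity)]
    rw [show 2 / Real.pi * (2 * Real.pi) = 4 by field_simp; ring]
    rw [show (4:ℝ) = 2 ^ 2 by norm_num, Real.sqrt_sq (by norm_num)]
  have hsp : (0:ℝ) < Real.sqrt (2 * Real.pi) := Real.sqrt_pos.2 (by positivity)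
  have m : Real.sqrt 2 * Real.sqrt 2 = 2 := Real.mul_self_sqrt (by norm_num)
  field_simp
  linear_combination -hs

lemma integrable_gaussDensity {d : ℕ} {σ : ℝ} (hσ : 0 < σ) :
    Integrable (gaussDensity d σ) := by
  rw [← MeasurePreserving.integrable_comp_emb
    (EuclideanSpace.volume_preserving_symm_measurableEquiv_toLp (Fin d)).symm
    (MeasurableEquiv.measurableEmbedding _)]
  have heq : (gaussDensity d σ) ∘ (MeasurableEquiv.toLp 2 (Fin d → ℝ)).symm.symm
      = fun x : Fin d → ℝ => ∏ i, ((2 * Real.pi * σ ^ 2) ^ (-(1 : ℝ) / 2)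
          * Real.exp (-(x i) ^ 2 / (2 * σ ^ 2))) := by
    funext x
    rw [Function.comp_apply, gauss_factor hσ]
    rfl
  rw [heq]
  exact Integrable.fintype_prod fun i => (integrable_g hσ).const_mul _

lemma tv_bound {d : ℕ} (hd : 1 ≤ d) {σ : ℝ} (hσ : 0 < σ)
    (v : EuclideanSpace ℝ (Fin d)) :
    ∫ z, |gaussDensity d σ (z - v) - gaussDensity d σ z|
      ≤ Real.sqrt (2 / Real.pi) / σ * ‖v‖ := by
  rcases eq_or_ne v 0 with rfl | hv
  · simp
  set a := ‖v‖ with haa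
  have ha : 0 < a := norm_pos_iff.2 hv
  set i0 : Fin d := ⟨0, hd⟩ with hi0
  set e₀ : EuclideanSpace ℝ (Fin d) := EuclideanSpace.single i0 a with he₀def
  have he₀ : ‖e₀‖ = ‖v‖ := by
    rw [he₀def, EuclideanSpace.norm_single, Real.norm_eq_abs, abs_of_pos ha]
  set R := Submodule.reflection (ℝ ∙ (e₀ - v))ᗮ with hR
  have hRe₀ : R e₀ = v := Submodule.reflection_sub he₀
  set c0 : ℝ := (2 * Real.pi * σ ^ 2) ^ (-(1 : ℝ) / 2) with hc0
  have hc0nn : 0 ≤ c0 := Real.rpow_nonneg (by positivity) _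
  -- step 1: rotate
  have step1 : ∫ z, |gaussDensity d σ (z - v) - gaussDensity d σ z|
      = ∫ w, |gaussDensity d σ (w - e₀) - gaussDensity d σ w| := by
    rw [← R.measurePreserving.integral_comp R.toHomeomorph.measurableEmbedding
      (fun z => |gaussDensity d σ (z - v) - gaussDensity d σ z|)]
    congr 1
    funext w
    have h1 : R w - v = R (w - e₀) := by rw [map_sub, hRe₀]
    have h2 : ∀ x, gaussDensity d σ (R x) = gaussDensity d σ x := by
      intro x; rw [gaussDensity, gaussDensity, R.norm_map]
    rw [h1, h2, h2]
  -- step 2: transfer to pi and factor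
  set h : Fin d → ℝ → ℝ := fun i t =>
    if i = i0 then c0 * |Real.exp (-(t - a) ^ 2 / (2 * σ ^ 2))
        - Real.exp (-t ^ 2 / (2 * σ ^ 2))|
    else c0 * Real.exp (-t ^ 2 / (2 * σ ^ 2)) with hh
  have step2 : ∫ w, |gaussDensity d σ (w - e₀) - gaussDensity d σ w|
      = ∫ x : Fin d → ℝ, ∏ i, h i (x i) := by
    rw [← MeasurePreserving.integral_comp
      (EuclideanSpace.volume_preserving_symm_measurableEquiv_toLp (Fin d)).symm
      (MeasurableEquiv.measurableEmbedding _)]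
    congr 1
    funext x
    set ψ := (MeasurableEquiv.toLp 2 (Fin d → ℝ)).symm.symm with hψ
    have hcoord : ∀ i, (ψ x) i = x i := fun _ => rfl
    have hcoord2 : ∀ i, (ψ x - e₀) i = x i - (if i = i0 then a else 0) := by
      intro i
      have : (ψ x - e₀) i = (ψ x) i - e₀ i := rfl
      rw [this, hcoord, he₀def, EuclideanSpace.single_apply]
    have hfac1 : gaussDensity d σ (ψ x - e₀)
        = (c0 * Real.exp (-(x i0 - a) ^ 2 / (2 * σ ^ 2)))
          * ∏ i ∈ Finset.univ.erase i0, (c0 * Real.exp (-(x i) ^ 2 / (2 * σ ^ 2))) := by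
      rw [gauss_factor hσ]
      simp only [hcoord2]
      rw [← Finset.mul_prod_erase Finset.univ _ (Finset.mem_univ i0), if_pos rfl]
      congr 1
      exact Finset.prod_congr rfl fun i hi => by
        rw [if_neg (Finset.ne_of_mem_erase hi), sub_zero]
    have hfac2 : gaussDensity d σ (ψ x)
        = (c0 * Real.exp (-(x i0) ^ 2 / (2 * σ ^ 2)))
          * ∏ i ∈ Finset.univ.erase i0, (c0 * Real.exp (-(x i) ^ 2 / (2 * σ ^ 2))) := by
      rw [gauss_factor hσ]
      simp only [hcoord]
      exact (Finset.mul_prod_erase Finset.univ _ (Finset.mem_univ i0)).symm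
    have hP : (0:ℝ) ≤ ∏ i ∈ Finset.univ.erase i0,
        (c0 * Real.exp (-(x i) ^ 2 / (2 * σ ^ 2))) :=
      Finset.prod_nonneg fun i _ => mul_nonneg hc0nn (Real.exp_pos _).le
    have hrhs : ∏ i, h i (x i)
        = (c0 * |Real.exp (-(x i0 - a) ^ 2 / (2 * σ ^ 2))
            - Real.exp (-(x i0) ^ 2 / (2 * σ ^ 2))|)
          * ∏ i ∈ Finset.univ.erase i0, (c0 * Real.exp (-(x i) ^ 2 / (2 * σ ^ 2))) := by
      rw [← Finset.mul_prod_erase Finset.univ _ (Finset.mem_univ i0)]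
      simp only [hh, if_true]
      congr 1
      exact Finset.prod_congr rfl fun i hi => by
        rw [if_neg (Finset.ne_of_mem_erase hi)]
    show |gaussDensity d σ (ψ x - e₀) - gaussDensity d σ (ψ x)| = _
    rw [hfac1, hfac2, hrhs, ← sub_mul, abs_mul, abs_of_nonneg hP,
      ← mul_sub, abs_mul, abs_of_nonneg hc0nn]
  -- step 3: Fubini
  have step3 : ∫ x : Fin d → ℝ, ∏ i, h i (x i) = ∏ i, ∫ t, h i t :=
    integral_fintype_prod_eq_prod (ι := Fin d) h
  -- step 4: compute/bound the factors
  have hother : ∀ i ∈ Finset.univ.erase i0, ∫ t, h i t = 1 := by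
    intro i hi
    rw [hh]
    simp only [if_neg (Finset.ne_of_mem_erase hi)]
    rw [integral_const_mul, integral_g hσ, hc0]
    have hpos : (0 : ℝ) < 2 * Real.pi * σ ^ 2 := by positivity
    rw [Real.sqrt_eq_rpow, ← Real.rpow_add hpos]
    norm_num
  have hmain : ∫ t, h i0 t ≤ Real.sqrt (2 / Real.pi) / σ * a := by
    rw [hh]
    simp only [↓reduceIte]
    rw [integral_const_mul]
    calc c0 * ∫ t, |Real.exp (-(t - a) ^ 2 / (2 * σ ^ 2))
          - Real.exp (-t ^ 2 / (2 * σ ^ 2))|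
        ≤ c0 * (2 * a) := mul_le_mul_of_nonneg_left (oneD_bound hσ ha.le) hc0nn
      _ = (2 * c0) * a := by ring
      _ = Real.sqrt (2 / Real.pi) / σ * a := by rw [hc0, two_c0 hσ]
  have hprod : ∏ i, ∫ t, h i t = ∫ t, h i0 t := by
    rw [← Finset.mul_prod_erase Finset.univ _ (Finset.mem_univ i0),
      Finset.prod_congr rfl hother, Finset.prod_const_one, mul_one]
  rw [step1, step2, step3, hprod]
  exact hmain

end Aux

/-- the Gaussian smoothing of a bounded measurable `u` is
`(𝔲/σ)√(2/π)`-Lipschitz for the Euclidean norm, where `𝔲 = sup |u|`. -/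
theorem gaussSmooth_lipschitz
    (d : ℕ) (hd : 1 ≤ d) (σ : ℝ) (hσ : 0 < σ)
    (u : EuclideanSpace ℝ (Fin d) → ℝ)
    (hu_meas : Measurable u) (hu_bdd : ∃ M : ℝ, ∀ x, |u x| ≤ M) :
    ∀ x y : EuclideanSpace ℝ (Fin d),
      |gaussSmooth d σ u x - gaussSmooth d σ u y|
        ≤ (⨆ w : EuclideanSpace ℝ (Fin d), |u w|) / σ * Real.sqrt (2 / Real.pi)
            * ‖x - y‖ := by
  intro x y
  obtain ⟨M, hM⟩ := hu_bdd
  set 𝔲 : ℝ := ⨆ w : EuclideanSpace ℝ (Fin d), |u w| with h𝔲def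
  have hBdd : BddAbove (Set.range fun w : EuclideanSpace ℝ (Fin d) => |u w|) :=
    ⟨M, fun r ⟨w, hw⟩ => hw ▸ hM w⟩
  have h𝔲 : ∀ w, |u w| ≤ 𝔲 := fun w => le_ciSup hBdd w
  have h𝔲0 : 0 ≤ 𝔲 := (abs_nonneg _).trans (h𝔲 0)
  set v := x - y with hv
  set ρ := gaussDensity d σ with hρ
  have hρ_int : Integrable ρ := integrable_gaussDensity hσ
  have hρsh_int : Integrable (fun z => ρ (z - v)) := by
    exact ((measurePreserving_sub_right (volume :
        Measure (EuclideanSpace ℝ (Fin d))) v).integrable_comp_emb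
      (MeasurableEquiv.subRight v).measurableEmbedding (g := ρ)).2 hρ_int
  have hΔ_int : Integrable (fun z => |ρ (z - v) - ρ z|) := (hρsh_int.sub hρ_int).abs
  -- change of variables in gaussSmooth
  have hxy : gaussSmooth d σ u x = ∫ z, u (y + z) * ρ (z - v) := by
    rw [gaussSmooth]
    rw [← integral_add_right_eq_self (fun z => u (x + z) * ρ z) (y - x)]
    congr 1
    funext z
    have h1 : x + (z + (y - x)) = y + z := by abel
    have h2 : z + (y - x) = z - v := by rw [hv]; abel
    rw [h1, h2]
  have hmeas_sh : AEStronglyMeasurable (fun z => u (y + z))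
      (volume : Measure (EuclideanSpace ℝ (Fin d))) :=
    (hu_meas.comp (measurable_const_add y)).aestronglyMeasurable
  have hbd : ∃ C, ∀ z, ‖u (y + z)‖ ≤ C := ⟨M, fun z => hM (y + z)⟩
  have hint1 : Integrable (fun z => u (y + z) * ρ (z - v)) :=
    hρsh_int.bdd_mul hmeas_sh (Filter.Eventually.of_forall hbd.choose_spec)
  have hint2 : Integrable (fun z => u (y + z) * ρ z) :=
    hρ_int.bdd_mul hmeas_sh (Filter.Eventually.of_forall hbd.choose_spec)
  have hyy : gaussSmooth d σ u y = ∫ z, u (y + z) * ρ z := rfl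
  have hdiff : gaussSmooth d σ u x - gaussSmooth d σ u y
      = ∫ z, u (y + z) * (ρ (z - v) - ρ z) := by
    rw [hxy, hyy, ← integral_sub hint1 hint2]
    congr 1
    funext z
    ring
  rw [hdiff]
  calc |∫ z, u (y + z) * (ρ (z - v) - ρ z)|
      ≤ ∫ z, |u (y + z) * (ρ (z - v) - ρ z)| := by
        simpa only [Real.norm_eq_abs] using norm_integral_le_integral_norm
          (μ := volume) (fun z => u (y + z) * (ρ (z - v) - ρ z))
    _ ≤ ∫ z, 𝔲 * |ρ (z - v) - ρ z| := by
        apply integral_mono_of_nonneg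
        · exact Filter.Eventually.of_forall fun z => abs_nonneg _
        · exact hΔ_int.const_mul 𝔲
        · refine Filter.Eventually.of_forall fun z => ?_
          show |u (y + z) * (ρ (z - v) - ρ z)| ≤ 𝔲 * |ρ (z - v) - ρ z|
          rw [abs_mul]
          exact mul_le_mul_of_nonneg_right (h𝔲 _) (abs_nonneg _)
    _ = 𝔲 * ∫ z, |ρ (z - v) - ρ z| := integral_const_mul 𝔲 _
    _ ≤ 𝔲 * (Real.sqrt (2 / Real.pi) / σ * ‖v‖) :=
        mul_le_mul_of_nonneg_left (tv_bound hd hσ v) h𝔲0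
    _ = 𝔲 / σ * Real.sqrt (2 / Real.pi) * ‖x - y‖ := by rw [hv]; ring
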